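/- Let f ∈ ℂ⟦x,y⟧ have 3-jet equal to x³ − y³, and let I be an ideal containing ∂f/∂x, ∂f/∂y and ⟨x,y⟩³ with dim_ℂ(R/I) ≥ 3, generated by two elements. Then I = ⟨x², y²⟩ (in suitable coordinates), and in particular the colength of I is exactly 4. -/

import Mathlib

set_option maxHeartbeats 1000000


/- STATEMENT 3: Let f ∈ ℂ⟦x,y⟧ with jet₃(f) = x³ − y³ (i.e. f − (x³−y³) ∈ ⟨x,y⟩⁴),
and let I be an ideal generated by two elements containing ∂f/∂x, ∂f/∂y and
⟨x,y⟩³ with dim_ℂ(R/I) ≥ 3.  Then (in suitable coordinates) I = ⟨x², y²⟩, and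
in particular the colength of I is exactly 4. -/

noncomputable section

abbrev R2 : Type := MvPowerSeries (Fin 2) ℂ

noncomputable def Xv : R2 := MvPowerSeries.X 0
noncomputable def Yv : R2 := MvPowerSeries.X 1

noncomputable def mR2 : Ideal R2 := Ideal.span {Xv, Yv}

/-- formal partial derivative of a power series in two variables -/
noncomputable def pd (i : Fin 2) (f : R2) : R2 :=
  fun m => ((m i : ℂ) + 1) * MvPowerSeries.coeff (m + Finsupp.single i 1) f

open MvPowerSeries Finsupp

def ee (a b : ℕ) : Fin 2 →₀ ℕ := Finsupp.single 0 a + Finsupp.single 1 b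

@[simp] lemma ee_apply0 (a b : ℕ) : ee a b 0 = a := by simp [ee, Finsupp.single_apply]
@[simp] lemma ee_apply1 (a b : ℕ) : ee a b 1 = b := by simp [ee, Finsupp.single_apply]

lemma eq_ee (m : Fin 2 →₀ ℕ) : m = ee (m 0) (m 1) := by
  ext i; fin_cases i <;> simp

lemma ee_inj {a b c d : ℕ} : ee a b = ee c d ↔ a = c ∧ b = d := by
  constructor
  · intro h
    exact ⟨by simpa using congrArg (fun m : Fin 2 →₀ ℕ => m 0) h,
      by simpa using congrArg (fun m : Fin 2 →₀ ℕ => m 1) h⟩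
  · rintro ⟨rfl, rfl⟩; rfl

@[simp] lemma ee_zero : ee 0 0 = 0 := by ext i; fin_cases i <;> simp

lemma XY_eq (a b : ℕ) : (Xv ^ a * Yv ^ b : R2) = MvPowerSeries.monomial (ee a b) 1 := by
  rw [Xv, Yv, MvPowerSeries.X_pow_eq, MvPowerSeries.X_pow_eq, MvPowerSeries.monomial_mul_monomial]
  simp [ee]

lemma Xv_eq : Xv = MvPowerSeries.monomial (ee 1 0) 1 := by
  simpa using XY_eq 1 0
lemma Yv_eq : Yv = MvPowerSeries.monomial (ee 0 1) 1 := by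
  simpa using XY_eq 0 1
lemma one_eq : (1 : R2) = MvPowerSeries.monomial (ee 0 0) 1 := by
  simp [ee_zero]

lemma coeff_ee_monomial (a b c d : ℕ) (r : ℂ) :
    MvPowerSeries.coeff (ee a b) (MvPowerSeries.monomial (ee c d) r)
      = if a = c ∧ b = d then r else 0 := by
  rw [MvPowerSeries.coeff_monomial]
  by_cases h : a = c ∧ b = d
  · rw [if_pos (ee_inj.mpr h), if_pos h]
  · rw [if_neg (fun hh => h (ee_inj.mp hh)), if_neg h]

-- dominant: membership in mR2 ^ n forces low coefficients to vanish
lemma vanish_of_mem_pow {n : ℕ} {f : R2} (hf : f ∈ mR2 ^ n) :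
    ∀ m : Fin 2 →₀ ℕ, m 0 + m 1 < n → MvPowerSeries.coeff m f = 0 := by
  classical
  induction n generalizing f with
  | zero => intro m hm; omega
  | succ n ih =>
    rw [pow_succ] at hf
    refine Submodule.mul_induction_on hf ?_ ?_
    · intro a ha b hb m hm
      have hb0 : MvPowerSeries.constantCoeff b = 0 := by
        have : mR2 ≤ RingHom.ker (MvPowerSeries.constantCoeff) := by
          rw [mR2, Ideal.span_le]
          rintro x (rfl | rfl) <;> simp [RingHom.mem_ker, Xv, Yv]
        exact this hb
      rw [MvPowerSeries.coeff_mul]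
      apply Finset.sum_eq_zero
      rintro ⟨p, q⟩ hpq
      rw [Finset.HasAntidiagonal.mem_antidiagonal] at hpq
      by_cases hq : q = 0
      · subst hq
        simp only [MvPowerSeries.coeff_zero_eq_constantCoeff, hb0, mul_zero]
      · have hq1 : 1 ≤ q 0 + q 1 := by
          rcases Finsupp.ne_iff.mp hq with ⟨i, hi⟩
          fin_cases i <;> simp at hi <;> omega
        have hp : p 0 + p 1 < n := by
          have h0 := congrArg (fun m : Fin 2 →₀ ℕ => m 0) hpq
          have h1 := congrArg (fun m : Fin 2 →₀ ℕ => m 1) hpq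
          simp at h0 h1
          omega
        rw [ih ha p hp, zero_mul]
    · intro a b iha ihb m hm
      rw [map_add, iha m hm, ihb m hm, add_zero]

lemma ee_le {a b : ℕ} {m : Fin 2 →₀ ℕ} : ee a b ≤ m ↔ a ≤ m 0 ∧ b ≤ m 1 := by
  rw [Finsupp.le_def]
  constructor
  · intro h; exact ⟨by simpa using h 0, by simpa using h 1⟩
  · rintro ⟨h1, h2⟩ i; fin_cases i <;> simpa

@[simp] lemma sub_ee_apply0 (m : Fin 2 →₀ ℕ) (a b : ℕ) : (m - ee a b) 0 = m 0 - a := by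
  simp [Finsupp.tsub_apply]
@[simp] lemma sub_ee_apply1 (m : Fin 2 →₀ ℕ) (a b : ℕ) : (m - ee a b) 1 = m 1 - b := by
  simp [Finsupp.tsub_apply]

lemma coeff_ee_mul (a b : ℕ) (g : R2) (m : Fin 2 →₀ ℕ) :
    MvPowerSeries.coeff m ((MvPowerSeries.monomial (ee a b) 1 : R2) * g)
      = if a ≤ m 0 ∧ b ≤ m 1 then MvPowerSeries.coeff (m - ee a b) g else 0 := by
  rw [MvPowerSeries.coeff_monomial_mul]
  by_cases h : a ≤ m 0 ∧ b ≤ m 1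
  · rw [if_pos (ee_le.mpr h), if_pos h, one_mul]
  · rw [if_neg (fun hh => h (ee_le.mp hh)), if_neg h]

lemma sub_add_ee {a b : ℕ} {m : Fin 2 →₀ ℕ} (ha : a ≤ m 0) (hb : b ≤ m 1) :
    m - ee a b + ee a b = m := by
  ext i; fin_cases i <;> simp <;> omega

/-- every f with vanishing coefficients at 1, x, y, xy decomposes as x²g + y²h -/
lemma decomp22 (f : R2) (h00 : MvPowerSeries.coeff (ee 0 0) f = 0)
    (h10 : MvPowerSeries.coeff (ee 1 0) f = 0)
    (h01 : MvPowerSeries.coeff (ee 0 1) f = 0)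
    (h11 : MvPowerSeries.coeff (ee 1 1) f = 0) :
    ∃ g h : R2, f = Xv ^ 2 * g + Yv ^ 2 * h
      ∧ MvPowerSeries.coeff (ee 0 0) g = MvPowerSeries.coeff (ee 2 0) f
      ∧ MvPowerSeries.coeff (ee 0 0) h = MvPowerSeries.coeff (ee 0 2) f := by
  classical
  refine ⟨(show R2 from fun q => MvPowerSeries.coeff (q + ee 2 0) f),
    (show R2 from fun q => if q 0 ≤ 1 then MvPowerSeries.coeff (q + ee 0 2) f else 0), ?_, ?_, ?_⟩
  · ext m
    rw [map_add]
    rw [show (Xv ^ 2 : R2) = MvPowerSeries.monomial (ee 2 0) 1 by simpa using XY_eq 2 0,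
      show (Yv ^ 2 : R2) = MvPowerSeries.monomial (ee 0 2) 1 by simpa using XY_eq 0 2,
      coeff_ee_mul, coeff_ee_mul]
    have hg : ∀ q : Fin 2 →₀ ℕ, MvPowerSeries.coeff q
        (show R2 from fun q => MvPowerSeries.coeff (q + ee 2 0) f)
        = MvPowerSeries.coeff (q + ee 2 0) f := fun q => rfl
    have hh : ∀ q : Fin 2 →₀ ℕ, MvPowerSeries.coeff q
        (show R2 from fun q => if q 0 ≤ 1 then MvPowerSeries.coeff (q + ee 0 2) f else 0)
        = if q 0 ≤ 1 then MvPowerSeries.coeff (q + ee 0 2) f else 0 := fun q => rfl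
    rw [hg, hh]
    by_cases h2 : 2 ≤ m 0
    · rw [if_pos ⟨h2, Nat.zero_le _⟩, sub_add_ee h2 (Nat.zero_le _)]
      have : ¬ ((m - ee 0 2) 0 ≤ 1) := by simp; omega
      by_cases h2' : 2 ≤ m 1
      · rw [if_pos ⟨Nat.zero_le _, h2'⟩, if_neg this, add_zero]
      · rw [if_neg (fun hc => h2' hc.2), add_zero]
    · rw [if_neg (fun hc => h2 hc.1), zero_add]
      by_cases h2' : 2 ≤ m 1
      · have : (m - ee 0 2) 0 ≤ 1 := by simp; omega
        rw [if_pos ⟨Nat.zero_le _, h2'⟩, if_pos this, sub_add_ee (Nat.zero_le _) h2']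
      · rw [if_neg (fun hc => h2' hc.2)]
        -- m has both coordinates ≤ 1, so coeff m f = 0 by hypothesis
        have hm := eq_ee m
        interval_cases h0 : m 0 <;> interval_cases h1 : m 1 <;>
          · rw [hm, h0, h1] at *
            first | exact h00 | exact h10 | exact h01 | exact h11
  · show MvPowerSeries.coeff (ee 0 0 + ee 2 0) f = _
    simp
  · show (if (ee 0 0) 0 ≤ 1 then MvPowerSeries.coeff (ee 0 0 + ee 0 2) f else 0) = _
    simp

/-- f with zero constant coefficient lies in the maximal ideal -/
lemma mem_m (f : R2) (h00 : MvPowerSeries.coeff (ee 0 0) f = 0) : f ∈ mR2 := by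
  classical
  have key : f = Xv * (show R2 from fun q => MvPowerSeries.coeff (q + ee 1 0) f)
      + Yv * (show R2 from fun q => if q 0 = 0 then MvPowerSeries.coeff (q + ee 0 1) f else 0) := by
    ext m
    rw [map_add, Xv_eq, Yv_eq, coeff_ee_mul, coeff_ee_mul]
    have hg : ∀ q : Fin 2 →₀ ℕ, MvPowerSeries.coeff q
        (show R2 from fun q => MvPowerSeries.coeff (q + ee 1 0) f)
        = MvPowerSeries.coeff (q + ee 1 0) f := fun q => rfl
    have hh : ∀ q : Fin 2 →₀ ℕ, MvPowerSeries.coeff q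
        (show R2 from fun q => if q 0 = 0 then MvPowerSeries.coeff (q + ee 0 1) f else 0)
        = if q 0 = 0 then MvPowerSeries.coeff (q + ee 0 1) f else 0 := fun q => rfl
    rw [hg, hh]
    by_cases h1 : 1 ≤ m 0
    · rw [if_pos ⟨h1, Nat.zero_le _⟩, sub_add_ee h1 (Nat.zero_le _)]
      have hne : ¬ ((m - ee 0 1) 0 = 0) := by simp; omega
      by_cases h1' : 1 ≤ m 1
      · rw [if_pos ⟨Nat.zero_le _, h1'⟩, if_neg hne, add_zero]
      · rw [if_neg (fun hc => h1' hc.2), add_zero]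
    · rw [if_neg (fun hc => h1 hc.1), zero_add]
      by_cases h1' : 1 ≤ m 1
      · have : (m - ee 0 1) 0 = 0 := by simp; omega
        rw [if_pos ⟨Nat.zero_le _, h1'⟩, if_pos this, sub_add_ee (Nat.zero_le _) h1']
      · rw [if_neg (fun hc => h1' hc.2)]
        have hm := eq_ee m
        have h0 : m 0 = 0 := by omega
        have h1'' : m 1 = 0 := by omega
        rw [hm, h0, h1'']
        exact h00
  rw [key]
  exact add_mem (Ideal.mul_mem_right _ _ (Ideal.subset_span (Or.inl rfl)))
    (Ideal.mul_mem_right _ _ (Ideal.subset_span (Or.inr rfl)))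

noncomputable def JJ : Ideal R2 := Ideal.span {Xv ^ 2, Yv ^ 2}

/-- f with vanishing coefficients at 1, x, y, xy lies in (x², y²) -/
lemma mem_J (f : R2) (h00 : MvPowerSeries.coeff (ee 0 0) f = 0)
    (h10 : MvPowerSeries.coeff (ee 1 0) f = 0)
    (h01 : MvPowerSeries.coeff (ee 0 1) f = 0)
    (h11 : MvPowerSeries.coeff (ee 1 1) f = 0) : f ∈ JJ := by
  obtain ⟨g, h, hfgh, -, -⟩ := decomp22 f h00 h10 h01 h11
  rw [hfgh]
  exact add_mem (Ideal.mul_mem_right _ _ (Ideal.subset_span (Or.inl rfl)))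
    (Ideal.mul_mem_right _ _ (Ideal.subset_span (Or.inr rfl)))

/-- f with vanishing coefficients in degree < 3 lies in m³ -/
lemma mem_m3 (f : R2) (hv : ∀ m : Fin 2 →₀ ℕ, m 0 + m 1 < 3 → MvPowerSeries.coeff m f = 0) :
    f ∈ mR2 ^ 3 := by
  obtain ⟨g, h, hfgh, hg0, hh0⟩ := decomp22 f (hv _ (by simp)) (hv _ (by simp))
    (hv _ (by simp)) (hv _ (by simp))
  have hgm : g ∈ mR2 := mem_m g (by rw [hg0]; exact hv _ (by simp))
  have hhm : h ∈ mR2 := mem_m h (by rw [hh0]; exact hv _ (by simp))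
  have hx2 : (Xv ^ 2 : R2) ∈ mR2 ^ 2 := by
    rw [pow_two, pow_two]
    exact Submodule.mul_mem_mul (Ideal.subset_span (Or.inl rfl)) (Ideal.subset_span (Or.inl rfl))
  have hy2 : (Yv ^ 2 : R2) ∈ mR2 ^ 2 := by
    rw [pow_two, pow_two]
    exact Submodule.mul_mem_mul (Ideal.subset_span (Or.inr rfl)) (Ideal.subset_span (Or.inr rfl))
  rw [hfgh, show (3 : ℕ) = 2 + 1 from rfl, pow_succ]
  exact add_mem (Submodule.mul_mem_mul hx2 hgm) (Submodule.mul_mem_mul hy2 hhm)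

/-- the (a,b) monomial part of f -/
noncomputable def MM (a b : ℕ) (f : R2) : R2 :=
  MvPowerSeries.monomial (ee a b) (MvPowerSeries.coeff (ee a b) f)

lemma sub_trunc2_mem (f : R2) :
    f - (MM 0 0 f + MM 1 0 f + MM 0 1 f + MM 1 1 f) ∈ JJ := by
  apply mem_J <;>
    · simp only [MM, map_sub, map_add, coeff_ee_monomial]
      norm_num

lemma sub_trunc3_mem (f : R2) :
    f - (MM 0 0 f + MM 1 0 f + MM 0 1 f + MM 2 0 f + MM 1 1 f + MM 0 2 f) ∈ mR2 ^ 3 := by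
  apply mem_m3
  intro m hm
  have h0 : m 0 ≤ 2 := by omega
  have h1 : m 1 ≤ 2 := by omega
  have hm' := eq_ee m
  rw [hm']
  interval_cases hh0 : m 0 <;> interval_cases hh1 : m 1 <;>
    first
      | omega
      | (simp only [MM, map_sub, map_add, coeff_ee_monomial]; norm_num)

/-- the key multiplication lemma: for g vanishing in degrees < 2 and |m| = 2,
the coefficient of p*g at m only sees the constant term of p -/
lemma coeff_mul_deg2 (p g : R2) (hg : ∀ q : Fin 2 →₀ ℕ, q 0 + q 1 < 2 → MvPowerSeries.coeff q g = 0)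
    (m : Fin 2 →₀ ℕ) (hm : m 0 + m 1 = 2) :
    MvPowerSeries.coeff m (p * g)
      = MvPowerSeries.coeff 0 p * MvPowerSeries.coeff m g := by
  classical
  rw [MvPowerSeries.coeff_mul]
  apply Finset.sum_eq_single_of_mem (0, m)
  · rw [Finset.HasAntidiagonal.mem_antidiagonal, zero_add]
  · rintro ⟨a, b⟩ hab hne
    rw [Finset.HasAntidiagonal.mem_antidiagonal] at hab
    have h0 := congrArg (fun m : Fin 2 →₀ ℕ => m 0) hab
    have h1 := congrArg (fun m : Fin 2 →₀ ℕ => m 1) hab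
    simp at h0 h1
    by_cases hb : b 0 + b 1 < 2
    · rw [hg b hb, mul_zero]
    · have ha0 : a 0 = 0 := by omega
      have ha1 : a 1 = 0 := by omega
      have ha : a = 0 := by
        ext i; fin_cases i <;> simpa
      exfalso
      apply hne
      rw [ha] at hab ⊢
      simp_all

lemma ee_add (a b c d : ℕ) : ee a b + ee c d = ee (a + c) (b + d) := by
  ext i; fin_cases i <;> simp

lemma mono_eq (n : Fin 2 →₀ ℕ) (c : ℂ) :
    MvPowerSeries.monomial n c = MvPowerSeries.C c * MvPowerSeries.monomial n 1 := by
  rw [← MvPowerSeries.smul_eq_C_mul, ← map_smul, smul_eq_mul, mul_one]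

lemma C_mul_mono (a : ℂ) (n : Fin 2 →₀ ℕ) (c : ℂ) :
    MvPowerSeries.C a * MvPowerSeries.monomial n c
      = MvPowerSeries.monomial n (a * c) := by
  rw [mono_eq n c, ← mul_assoc, ← map_mul, ← mono_eq]

lemma mono_mem_m3 (a b : ℕ) (hab : 3 ≤ a + b) (c : ℂ) :
    (MvPowerSeries.monomial (ee a b) c : R2) ∈ mR2 ^ 3 := by
  apply mem_m3
  intro m hm
  rw [eq_ee m, coeff_ee_monomial]
  rw [if_neg]
  rintro ⟨h1, h2⟩
  omega

lemma smul_mk (I : Ideal R2) (a : ℂ) (w : R2) :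
    a • (Ideal.Quotient.mk I w) = Ideal.Quotient.mk I (MvPowerSeries.C a * w) := by
  have h := map_smul (Ideal.Quotient.mkₐ ℂ I) a w
  rw [Ideal.Quotient.mkₐ_eq_mk] at h
  rw [← h]
  congr 1
  rw [MvPowerSeries.smul_eq_C_mul]

lemma finrank_le_two {M : Type} [AddCommGroup M] [Module ℂ M] (u v : M)
    (hspan : ⊤ ≤ Submodule.span ℂ ({u, v} : Set M)) : Module.finrank ℂ M ≤ 2 := by
  classical
  have htop : Submodule.span ℂ ({u, v} : Set M) = ⊤ := le_antisymm le_top hspan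
  have h1 : Module.finrank ℂ M = Module.finrank ℂ (⊤ : Submodule ℂ M) :=
    (finrank_top ℂ M).symm
  rw [h1, ← htop]
  refine le_trans (finrank_span_le_card _) ?_
  rw [Set.toFinset_insert, Set.toFinset_singleton]
  refine le_trans (Finset.card_insert_le _ _) ?_
  simp

lemma MM_eq (a b : ℕ) (w : R2) :
    MM a b w = MvPowerSeries.C (MvPowerSeries.coeff (ee a b) w) * (Xv ^ a * Yv ^ b) := by
  rw [MM, mono_eq, XY_eq]

/-- the images of 1, X, Y, XY span the quotient by any ideal containing J -/
lemma quot_spanned (I : Ideal R2) (hJI : JJ ≤ I) (w : R2) :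
    Ideal.Quotient.mk I w ∈ Submodule.span ℂ
      {Ideal.Quotient.mk I 1, Ideal.Quotient.mk I Xv, Ideal.Quotient.mk I Yv,
        Ideal.Quotient.mk I (Xv * Yv)} := by
  have hd := sub_trunc2_mem w
  have hmem : w - (MM 0 0 w + MM 1 0 w + MM 0 1 w + MM 1 1 w) ∈ I := hJI hd
  have hqe : Ideal.Quotient.mk I w
      = Ideal.Quotient.mk I (MM 0 0 w + MM 1 0 w + MM 0 1 w + MM 1 1 w) := by
    rw [Ideal.Quotient.mk_eq_mk_iff_sub_mem]
    exact hmem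
  rw [hqe, map_add, map_add, map_add]
  have e00 : Ideal.Quotient.mk I (MM 0 0 w)
      = (MvPowerSeries.coeff (ee 0 0) w) • Ideal.Quotient.mk I 1 := by
    rw [smul_mk, MM_eq]; norm_num
  have e10 : Ideal.Quotient.mk I (MM 1 0 w)
      = (MvPowerSeries.coeff (ee 1 0) w) • Ideal.Quotient.mk I Xv := by
    rw [smul_mk, MM_eq]; norm_num
  have e01 : Ideal.Quotient.mk I (MM 0 1 w)
      = (MvPowerSeries.coeff (ee 0 1) w) • Ideal.Quotient.mk I Yv := by
    rw [smul_mk, MM_eq]; norm_num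
  have e11 : Ideal.Quotient.mk I (MM 1 1 w)
      = (MvPowerSeries.coeff (ee 1 1) w) • Ideal.Quotient.mk I (Xv * Yv) := by
    rw [smul_mk, MM_eq]; norm_num
  rw [e00, e10, e01, e11]
  have m1 : Ideal.Quotient.mk I 1 ∈ ({Ideal.Quotient.mk I 1, Ideal.Quotient.mk I Xv,
      Ideal.Quotient.mk I Yv, Ideal.Quotient.mk I (Xv * Yv)} : Set (R2 ⧸ I)) := by
    simp
  have m2 : Ideal.Quotient.mk I Xv ∈ ({Ideal.Quotient.mk I 1, Ideal.Quotient.mk I Xv,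
      Ideal.Quotient.mk I Yv, Ideal.Quotient.mk I (Xv * Yv)} : Set (R2 ⧸ I)) := by
    simp
  have m3 : Ideal.Quotient.mk I Yv ∈ ({Ideal.Quotient.mk I 1, Ideal.Quotient.mk I Xv,
      Ideal.Quotient.mk I Yv, Ideal.Quotient.mk I (Xv * Yv)} : Set (R2 ⧸ I)) := by
    simp
  have m4 : Ideal.Quotient.mk I (Xv * Yv) ∈ ({Ideal.Quotient.mk I 1, Ideal.Quotient.mk I Xv,
      Ideal.Quotient.mk I Yv, Ideal.Quotient.mk I (Xv * Yv)} : Set (R2 ⧸ I)) := by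
    simp
  exact add_mem (add_mem (add_mem
    (Submodule.smul_mem _ _ (Submodule.subset_span m1))
    (Submodule.smul_mem _ _ (Submodule.subset_span m2)))
    (Submodule.smul_mem _ _ (Submodule.subset_span m3)))
    (Submodule.smul_mem _ _ (Submodule.subset_span m4))

lemma low_vanish (I : Ideal R2) (hX2 : Xv ^ 2 ∈ I) (hY2 : Yv ^ 2 ∈ I) (hm3 : mR2 ^ 3 ≤ I)
    (hdim : 3 ≤ Module.finrank ℂ (R2 ⧸ I)) (v : R2) (hv : v ∈ I) :
    MvPowerSeries.coeff (ee 0 0) v = 0 ∧ MvPowerSeries.coeff (ee 1 0) v = 0 ∧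
      MvPowerSeries.coeff (ee 0 1) v = 0 := by
  classical
  have hJI : JJ ≤ I := by
    rw [JJ, Ideal.span_le]
    rintro x (rfl | rfl)
    exacts [hX2, hY2]
  -- constant coefficient vanishes
  have h00 : MvPowerSeries.coeff (ee 0 0) v = 0 := by
    by_contra hc
    have hu : IsUnit v := by
      rw [MvPowerSeries.isUnit_iff_constantCoeff]
      rw [← MvPowerSeries.coeff_zero_eq_constantCoeff_apply, ← ee_zero]
      exact isUnit_iff_ne_zero.mpr hc
    have htop : I = ⊤ := I.eq_top_of_isUnit_mem hv hu
    have : Subsingleton (R2 ⧸ I) := Ideal.Quotient.subsingleton_iff.mpr htop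
    rw [Module.finrank_zero_of_subsingleton] at hdim
    omega
  refine ⟨h00, ?_⟩
  set A := MvPowerSeries.coeff (ee 1 0) v with hA
  set B := MvPowerSeries.coeff (ee 0 1) v with hB
  set D := MvPowerSeries.coeff (ee 1 1) v with hD
  -- the truncation relation
  have hrel : (MvPowerSeries.monomial (ee 1 0) A + MvPowerSeries.monomial (ee 0 1) B
      + MvPowerSeries.monomial (ee 1 1) D : R2) ∈ I := by
    have hd := hm3 (sub_trunc3_mem v)
    have hMM00 : MM 0 0 v = 0 := by rw [MM, h00, map_zero]
    have h20 : MM 2 0 v ∈ I := by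
      rw [MM_eq]
      rw [pow_zero, mul_one]
      exact Ideal.mul_mem_left _ _ hX2
    have h02 : MM 0 2 v ∈ I := by
      rw [MM_eq]
      rw [pow_zero, one_mul]
      exact Ideal.mul_mem_left _ _ hY2
    have : MM 1 0 v + MM 0 1 v + MM 1 1 v
        = v - (v - (MM 0 0 v + MM 1 0 v + MM 0 1 v + MM 2 0 v + MM 1 1 v + MM 0 2 v))
          - MM 0 0 v - MM 2 0 v - MM 0 2 v := by ring
    have hmem : MM 1 0 v + MM 0 1 v + MM 1 1 v ∈ I := by
      rw [this]
      exact sub_mem (sub_mem (sub_mem (sub_mem hv hd)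
        (by rw [hMM00]; exact zero_mem I)) h20) h02
    simpa [MM] using hmem
  -- key step: if A ≠ 0 or B ≠ 0 we contradict the dimension assumption
  constructor
  · -- A = 0
    by_contra hAne
    -- multiply by Yv to get XY ∈ I
    have hYrel := Ideal.mul_mem_left I Yv hrel
    rw [mul_add, mul_add, Yv_eq, MvPowerSeries.monomial_mul_monomial,
      MvPowerSeries.monomial_mul_monomial, MvPowerSeries.monomial_mul_monomial,
      ee_add, ee_add, ee_add] at hYrel
    norm_num at hYrel
    -- hYrel : monomial (ee 1 1) A + monomial (ee 0 2) B + monomial (ee 1 2) D ∈ I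
    have hB2 : (MvPowerSeries.monomial (ee 0 2) B : R2) ∈ I := by
      rw [mono_eq, ← XY_eq 0 2]
      rw [pow_zero, one_mul]
      exact Ideal.mul_mem_left _ _ hY2
    have hD2 : (MvPowerSeries.monomial (ee 1 2) D : R2) ∈ I := hm3 (mono_mem_m3 1 2 (by norm_num) D)
    have h11A : (MvPowerSeries.monomial (ee 1 1) A : R2) ∈ I := by
      have : (MvPowerSeries.monomial (ee 1 1) A : R2)
          = (MvPowerSeries.monomial (ee 1 1) A + MvPowerSeries.monomial (ee 0 2) B
            + MvPowerSeries.monomial (ee 1 2) D) - MvPowerSeries.monomial (ee 0 2) B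
            - MvPowerSeries.monomial (ee 1 2) D := by ring
      rw [this]
      exact sub_mem (sub_mem hYrel hB2) hD2
    have hXY : Xv * Yv ∈ I := by
      have := Ideal.mul_mem_left I (MvPowerSeries.C A⁻¹) h11A
      rw [C_mul_mono, inv_mul_cancel₀ hAne] at this
      rw [show Xv * Yv = Xv ^ 1 * Yv ^ 1 by ring, XY_eq]
      exact this
    -- X + (A⁻¹B) Y ∈ I
    have hD11 : (MvPowerSeries.monomial (ee 1 1) D : R2) ∈ I := by
      rw [mono_eq, ← XY_eq 1 1, pow_one, pow_one]
      exact Ideal.mul_mem_left _ _ hXY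
    have hlin : (MvPowerSeries.monomial (ee 1 0) A + MvPowerSeries.monomial (ee 0 1) B : R2) ∈ I := by
      have : (MvPowerSeries.monomial (ee 1 0) A + MvPowerSeries.monomial (ee 0 1) B : R2)
          = (MvPowerSeries.monomial (ee 1 0) A + MvPowerSeries.monomial (ee 0 1) B
            + MvPowerSeries.monomial (ee 1 1) D) - MvPowerSeries.monomial (ee 1 1) D := by ring
      rw [this]
      exact sub_mem hrel hD11
    -- in the quotient, X = -(A⁻¹B) • Y
    set K := Ideal.Quotient.mk I with hK
    have hqlin : K Xv = (-(A⁻¹ * B)) • K Yv := by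
      have h0 : K (MvPowerSeries.C A⁻¹
          * (MvPowerSeries.monomial (ee 1 0) A + MvPowerSeries.monomial (ee 0 1) B)) = 0 :=
        Ideal.Quotient.eq_zero_iff_mem.mpr (Ideal.mul_mem_left _ _ hlin)
      rw [mul_add, C_mul_mono, C_mul_mono, inv_mul_cancel₀ hAne] at h0
      rw [map_add] at h0
      have h1 : K (MvPowerSeries.monomial (ee 1 0) 1) = K Xv := by rw [Xv_eq]
      have h2 : K (MvPowerSeries.monomial (ee 0 1) (A⁻¹ * B))
          = (A⁻¹ * B) • K Yv := by
        rw [smul_mk, Yv_eq, C_mul_mono, mul_one]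
      rw [h1, h2] at h0
      have := eq_neg_of_add_eq_zero_left h0
      rw [this, neg_smul]
    have hqXY : K (Xv * Yv) = 0 := Ideal.Quotient.eq_zero_iff_mem.mpr hXY
    -- quotient spanned by K 1, K Yv
    have hspan : ⊤ ≤ Submodule.span ℂ ({K 1, K Yv} : Set (R2 ⧸ I)) := by
      intro z _
      obtain ⟨w, rfl⟩ := Ideal.Quotient.mk_surjective z
      have hw := quot_spanned I hJI w
      refine Submodule.span_le.mpr ?_ hw
      rintro x (rfl | rfl | rfl | rfl)
      · exact Submodule.subset_span (by simp)
      · rw [hqlin]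
        exact Submodule.smul_mem _ _ (Submodule.subset_span (by simp))
      · exact Submodule.subset_span (by simp [hK])
      · rw [hqXY]
        exact zero_mem _
    have := finrank_le_two (K 1) (K Yv) hspan
    omega
  · -- B = 0 : symmetric case, multiply by Xv
    by_contra hBne
    have hXrel := Ideal.mul_mem_left I Xv hrel
    rw [mul_add, mul_add, Xv_eq, MvPowerSeries.monomial_mul_monomial,
      MvPowerSeries.monomial_mul_monomial, MvPowerSeries.monomial_mul_monomial,
      ee_add, ee_add, ee_add] at hXrel
    norm_num at hXrel
    -- hXrel : monomial (ee 2 0) A + monomial (ee 1 1) B + monomial (ee 2 1) D ∈ I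
    have hA2 : (MvPowerSeries.monomial (ee 2 0) A : R2) ∈ I := by
      rw [mono_eq, ← XY_eq 2 0]
      rw [pow_zero, mul_one]
      exact Ideal.mul_mem_left _ _ hX2
    have hD2 : (MvPowerSeries.monomial (ee 2 1) D : R2) ∈ I := hm3 (mono_mem_m3 2 1 (by norm_num) D)
    have h11B : (MvPowerSeries.monomial (ee 1 1) B : R2) ∈ I := by
      have : (MvPowerSeries.monomial (ee 1 1) B : R2)
          = (MvPowerSeries.monomial (ee 2 0) A + MvPowerSeries.monomial (ee 1 1) B
            + MvPowerSeries.monomial (ee 2 1) D) - MvPowerSeries.monomial (ee 2 0) A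
            - MvPowerSeries.monomial (ee 2 1) D := by ring
      rw [this]
      exact sub_mem (sub_mem hXrel hA2) hD2
    have hXY : Xv * Yv ∈ I := by
      have := Ideal.mul_mem_left I (MvPowerSeries.C B⁻¹) h11B
      rw [C_mul_mono, inv_mul_cancel₀ hBne] at this
      rw [show Xv * Yv = Xv ^ 1 * Yv ^ 1 by ring, XY_eq]
      exact this
    have hD11 : (MvPowerSeries.monomial (ee 1 1) D : R2) ∈ I := by
      rw [mono_eq, ← XY_eq 1 1, pow_one, pow_one]
      exact Ideal.mul_mem_left _ _ hXY
    have hlin : (MvPowerSeries.monomial (ee 1 0) A + MvPowerSeries.monomial (ee 0 1) B : R2) ∈ I := by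
      have : (MvPowerSeries.monomial (ee 1 0) A + MvPowerSeries.monomial (ee 0 1) B : R2)
          = (MvPowerSeries.monomial (ee 1 0) A + MvPowerSeries.monomial (ee 0 1) B
            + MvPowerSeries.monomial (ee 1 1) D) - MvPowerSeries.monomial (ee 1 1) D := by ring
      rw [this]
      exact sub_mem hrel hD11
    set K := Ideal.Quotient.mk I with hK
    have hqlin : K Yv = (-(B⁻¹ * A)) • K Xv := by
      have h0 : K (MvPowerSeries.C B⁻¹
          * (MvPowerSeries.monomial (ee 1 0) A + MvPowerSeries.monomial (ee 0 1) B)) = 0 :=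
        Ideal.Quotient.eq_zero_iff_mem.mpr (Ideal.mul_mem_left _ _ hlin)
      rw [mul_add, C_mul_mono, C_mul_mono, inv_mul_cancel₀ hBne] at h0
      rw [map_add] at h0
      have h1 : K (MvPowerSeries.monomial (ee 0 1) 1) = K Yv := by rw [Yv_eq]
      have h2 : K (MvPowerSeries.monomial (ee 1 0) (B⁻¹ * A))
          = (B⁻¹ * A) • K Xv := by
        rw [smul_mk, Xv_eq, C_mul_mono, mul_one]
      rw [h1, h2] at h0
      have := eq_neg_of_add_eq_zero_right h0
      rw [this, neg_smul]
    have hqXY : K (Xv * Yv) = 0 := Ideal.Quotient.eq_zero_iff_mem.mpr hXY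
    have hspan : ⊤ ≤ Submodule.span ℂ ({K 1, K Xv} : Set (R2 ⧸ I)) := by
      intro z _
      obtain ⟨w, rfl⟩ := Ideal.Quotient.mk_surjective z
      have hw := quot_spanned I hJI w
      refine Submodule.span_le.mpr ?_ hw
      rintro x (rfl | rfl | rfl | rfl)
      · exact Submodule.subset_span (by simp)
      · exact Submodule.subset_span (by simp [hK])
      · rw [hqlin]
        exact Submodule.smul_mem _ _ (Submodule.subset_span (by simp))
      · rw [hqXY]
        exact zero_mem _
    have := finrank_le_two (K 1) (K Xv) hspan
    omega


lemma coeff_pd (i : Fin 2) (f : R2) (m : Fin 2 →₀ ℕ) :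
    MvPowerSeries.coeff m (pd i f)
      = ((m i : ℂ) + 1) * MvPowerSeries.coeff (m + Finsupp.single i 1) f := rfl

lemma add_single0 (m : Fin 2 →₀ ℕ) : m + Finsupp.single (0 : Fin 2) 1 = ee (m 0 + 1) (m 1) := by
  ext i; fin_cases i <;> simp [Finsupp.single_apply]
lemma add_single1 (m : Fin 2 →₀ ℕ) : m + Finsupp.single (1 : Fin 2) 1 = ee (m 0) (m 1 + 1) := by
  ext i; fin_cases i <;> simp [Finsupp.single_apply]

lemma X2_Y2_mem (f : R2) (I : Ideal R2)
    (hjet : f - (Xv ^ 3 - Yv ^ 3) ∈ mR2 ^ 4)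
    (hdx : pd 0 f ∈ I) (hdy : pd 1 f ∈ I) (hm3 : mR2 ^ 3 ≤ I) :
    Xv ^ 2 ∈ I ∧ Yv ^ 2 ∈ I := by
  have hv4 := vanish_of_mem_pow hjet
  have hcf : ∀ m' : Fin 2 →₀ ℕ, m' 0 + m' 1 < 4 →
      MvPowerSeries.coeff m' f = MvPowerSeries.coeff m' (Xv ^ 3 - Yv ^ 3) := by
    intro m' hm'
    have := hv4 m' hm'
    rw [map_sub, sub_eq_zero] at this
    exact this
  have hX3 : (Xv ^ 3 : R2) = MvPowerSeries.monomial (ee 3 0) 1 := by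
    simpa using XY_eq 3 0
  have hY3 : (Yv ^ 3 : R2) = MvPowerSeries.monomial (ee 0 3) 1 := by
    simpa using XY_eq 0 3
  have claimX : pd 0 f - MvPowerSeries.monomial (ee 2 0) 3 ∈ mR2 ^ 3 := by
    apply mem_m3
    intro m hm
    rw [map_sub, coeff_pd, add_single0]
    rw [hcf _ (by simp; omega), map_sub, hX3, hY3, coeff_ee_monomial, coeff_ee_monomial]
    rw [eq_ee m, coeff_ee_monomial]
    simp only [ee_apply0, ee_apply1]
    by_cases hc : m 0 = 2 ∧ m 1 = 0
    · rw [if_pos (by omega), if_neg (by omega), if_pos hc, hc.1]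
      norm_num
    · rw [if_neg (by omega), if_neg (by omega), if_neg hc]
      ring
  have claimY : pd 1 f - MvPowerSeries.monomial (ee 0 2) (-3) ∈ mR2 ^ 3 := by
    apply mem_m3
    intro m hm
    rw [map_sub, coeff_pd, add_single1]
    rw [hcf _ (by simp; omega), map_sub, hX3, hY3, coeff_ee_monomial, coeff_ee_monomial]
    rw [eq_ee m, coeff_ee_monomial]
    simp only [ee_apply0, ee_apply1]
    by_cases hc : m 0 = 0 ∧ m 1 = 2
    · rw [if_neg (by omega), if_pos (by omega), if_pos hc, hc.2]
      norm_num
    · rw [if_neg (by omega), if_neg (by omega), if_neg hc]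
      ring
  have hmonoX : (MvPowerSeries.monomial (ee 2 0) 3 : R2) ∈ I := by
    have : (MvPowerSeries.monomial (ee 2 0) 3 : R2)
        = pd 0 f - (pd 0 f - MvPowerSeries.monomial (ee 2 0) 3) := by ring
    rw [this]
    exact sub_mem hdx (hm3 claimX)
  have hmonoY : (MvPowerSeries.monomial (ee 0 2) (-3) : R2) ∈ I := by
    have : (MvPowerSeries.monomial (ee 0 2) (-3) : R2)
        = pd 1 f - (pd 1 f - MvPowerSeries.monomial (ee 0 2) (-3)) := by ring
    rw [this]
    exact sub_mem hdy (hm3 claimY)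
  constructor
  · have := Ideal.mul_mem_left I (MvPowerSeries.C (3 : ℂ)⁻¹) hmonoX
    rw [C_mul_mono] at this
    norm_num at this
    rw [show (Xv ^ 2 : R2) = MvPowerSeries.monomial (ee 2 0) 1 by simpa using XY_eq 2 0]
    exact this
  · have := Ideal.mul_mem_left I (MvPowerSeries.C (-3 : ℂ)⁻¹) hmonoY
    rw [C_mul_mono] at this
    norm_num at this
    rw [show (Yv ^ 2 : R2) = MvPowerSeries.monomial (ee 0 2) 1 by simpa using XY_eq 0 2]
    exact this

lemma J_coeff_zero (w : R2) (hw : w ∈ JJ) (a b : ℕ) (ha : a ≤ 1) (hb : b ≤ 1) :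
    MvPowerSeries.coeff (ee a b) w = 0 := by
  rw [JJ] at hw
  obtain ⟨p, q, hpq⟩ := Ideal.mem_span_pair.mp hw
  rw [← hpq, map_add]
  rw [show (Xv ^ 2 : R2) = MvPowerSeries.monomial (ee 2 0) 1 by simpa using XY_eq 2 0,
    show (Yv ^ 2 : R2) = MvPowerSeries.monomial (ee 0 2) 1 by simpa using XY_eq 0 2,
    MvPowerSeries.coeff_mul_monomial, MvPowerSeries.coeff_mul_monomial]
  rw [if_neg, if_neg, add_zero]
  · intro hc; have := ee_le.mp hc; simp at this; omega
  · intro hc; have := ee_le.mp hc; simp at this; omega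

lemma finrank_JJ : Module.finrank ℂ (R2 ⧸ JJ) = 4 := by
  classical
  set K := Ideal.Quotient.mk JJ with hK
  set bb : Fin 4 → R2 ⧸ JJ := ![K 1, K Xv, K Yv, K (Xv * Yv)] with hbb
  have hindep : LinearIndependent ℂ bb := by
    rw [Fintype.linearIndependent_iff]
    intro c hc
    rw [hbb] at hc
    rw [Fin.sum_univ_four] at hc
    simp only [Matrix.cons_val_zero, Matrix.cons_val_one, Matrix.head_cons,
      Matrix.cons_val_two, Matrix.tail_cons, Matrix.cons_val_three] at hc
    rw [smul_mk, smul_mk, smul_mk, smul_mk, ← map_add, ← map_add, ← map_add] at hc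
    have hz := Ideal.Quotient.eq_zero_iff_mem.mp hc
    have hzz : (MvPowerSeries.monomial (ee 0 0) (c 0) + MvPowerSeries.monomial (ee 1 0) (c 1)
        + MvPowerSeries.monomial (ee 0 1) (c 2) + MvPowerSeries.monomial (ee 1 1) (c 3) : R2)
        ∈ JJ := by
      have e0 : MvPowerSeries.C (c 0) * (1 : R2)
          = MvPowerSeries.monomial (ee 0 0) (c 0) := by
        rw [one_eq, C_mul_mono, mul_one]
      have e1 : MvPowerSeries.C (c 1) * Xv
          = MvPowerSeries.monomial (ee 1 0) (c 1) := by
        rw [Xv_eq, C_mul_mono, mul_one]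
      have e2 : MvPowerSeries.C (c 2) * Yv
          = MvPowerSeries.monomial (ee 0 1) (c 2) := by
        rw [Yv_eq, C_mul_mono, mul_one]
      have e3 : MvPowerSeries.C (c 3) * (Xv * Yv)
          = MvPowerSeries.monomial (ee 1 1) (c 3) := by
        rw [show Xv * Yv = Xv ^ 1 * Yv ^ 1 by ring, XY_eq, C_mul_mono, mul_one]
      rw [← e0, ← e1, ← e2, ← e3]
      exact hz
    have hc0 := J_coeff_zero _ hzz 0 0 (by omega) (by omega)
    have hc1 := J_coeff_zero _ hzz 1 0 (by omega) (by omega)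
    have hc2 := J_coeff_zero _ hzz 0 1 (by omega) (by omega)
    have hc3 := J_coeff_zero _ hzz 1 1 (by omega) (by omega)
    simp only [map_add, coeff_ee_monomial] at hc0 hc1 hc2 hc3
    norm_num at hc0 hc1 hc2 hc3
    intro i
    fin_cases i <;> assumption
  have hspan : ⊤ ≤ Submodule.span ℂ (Set.range bb) := by
    intro z _
    obtain ⟨w, rfl⟩ := Ideal.Quotient.mk_surjective z
    have hw := quot_spanned JJ le_rfl w
    refine Submodule.span_le.mpr ?_ hw
    rintro x (rfl | rfl | rfl | rfl)
    · exact Submodule.subset_span ⟨0, rfl⟩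
    · exact Submodule.subset_span ⟨1, rfl⟩
    · exact Submodule.subset_span ⟨2, rfl⟩
    · exact Submodule.subset_span ⟨3, rfl⟩
  let B := Module.Basis.mk hindep hspan
  rw [Module.finrank_eq_card_basis B]
  simp

lemma vanish2 (v : R2) (h00 : MvPowerSeries.coeff (ee 0 0) v = 0)
    (h10 : MvPowerSeries.coeff (ee 1 0) v = 0)
    (h01 : MvPowerSeries.coeff (ee 0 1) v = 0) :
    ∀ q : Fin 2 →₀ ℕ, q 0 + q 1 < 2 → MvPowerSeries.coeff q v = 0 := by
  intro q hq
  rw [eq_ee q]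
  have ha : q 0 ≤ 1 := by omega
  have hb : q 1 ≤ 1 := by omega
  interval_cases hh0 : q 0 <;> interval_cases hh1 : q 1 <;>
    first | exact h00 | exact h10 | exact h01 | omega

lemma XY_mem (I : Ideal R2) (hJI : JJ ≤ I) (v : R2) (hv : v ∈ I)
    (h00 : MvPowerSeries.coeff (ee 0 0) v = 0)
    (h10 : MvPowerSeries.coeff (ee 1 0) v = 0)
    (h01 : MvPowerSeries.coeff (ee 0 1) v = 0)
    (hD : MvPowerSeries.coeff (ee 1 1) v ≠ 0) : Xv * Yv ∈ I := by
  have hd := hJI (sub_trunc2_mem v)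
  have hz : MM 0 0 v = 0 := by rw [MM, h00, map_zero]
  have hz1 : MM 1 0 v = 0 := by rw [MM, h10, map_zero]
  have hz2 : MM 0 1 v = 0 := by rw [MM, h01, map_zero]
  rw [hz, hz1, hz2] at hd
  norm_num at hd
  -- hd : v - MM 1 1 v ∈ I
  have hmm : MM 1 1 v ∈ I := by
    have : MM 1 1 v = v - (v - MM 1 1 v) := by ring
    rw [this]
    exact sub_mem hv hd
  rw [MM] at hmm
  have := Ideal.mul_mem_left I (MvPowerSeries.C (MvPowerSeries.coeff (ee 1 1) v)⁻¹) hmm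
  rw [C_mul_mono, inv_mul_cancel₀ hD] at this
  rw [show Xv * Yv = Xv ^ 1 * Yv ^ 1 by ring, XY_eq]
  exact this

lemma not_two_gen (g h : R2) (I : Ideal R2) (hI : I = Ideal.span {g, h})
    (gvan : ∀ q : Fin 2 →₀ ℕ, q 0 + q 1 < 2 → MvPowerSeries.coeff q g = 0)
    (hvan : ∀ q : Fin 2 →₀ ℕ, q 0 + q 1 < 2 → MvPowerSeries.coeff q h = 0)
    (hX2 : Xv ^ 2 ∈ I) (hY2 : Yv ^ 2 ∈ I) (hXY : Xv * Yv ∈ I) : False := by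
  rw [hI] at hX2 hY2 hXY
  obtain ⟨p1, q1, E1⟩ := Ideal.mem_span_pair.mp hX2
  obtain ⟨p2, q2, E2⟩ := Ideal.mem_span_pair.mp hXY
  obtain ⟨p3, q3, E3⟩ := Ideal.mem_span_pair.mp hY2
  have coeq : ∀ (p q Z : R2), p * g + q * h = Z → ∀ a b : ℕ, a + b = 2 →
      MvPowerSeries.coeff 0 p * MvPowerSeries.coeff (ee a b) g
      + MvPowerSeries.coeff 0 q * MvPowerSeries.coeff (ee a b) h
      = MvPowerSeries.coeff (ee a b) Z := by
    intro p q Z hpq a b hab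
    have := congrArg (MvPowerSeries.coeff (ee a b)) hpq
    rw [map_add, coeff_mul_deg2 p g gvan _ (by simp [hab]),
      coeff_mul_deg2 q h hvan _ (by simp [hab])] at this
    exact this
  have cX2 : ∀ a b : ℕ, MvPowerSeries.coeff (ee a b) (Xv ^ 2 : R2)
      = if a = 2 ∧ b = 0 then 1 else 0 := by
    intro a b
    rw [show (Xv ^ 2 : R2) = MvPowerSeries.monomial (ee 2 0) 1 by simpa using XY_eq 2 0,
      coeff_ee_monomial]
  have cY2 : ∀ a b : ℕ, MvPowerSeries.coeff (ee a b) (Yv ^ 2 : R2)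
      = if a = 0 ∧ b = 2 then 1 else 0 := by
    intro a b
    rw [show (Yv ^ 2 : R2) = MvPowerSeries.monomial (ee 0 2) 1 by simpa using XY_eq 0 2,
      coeff_ee_monomial]
  have cXY : ∀ a b : ℕ, MvPowerSeries.coeff (ee a b) (Xv * Yv : R2)
      = if a = 1 ∧ b = 1 then 1 else 0 := by
    intro a b
    rw [show Xv * Yv = Xv ^ 1 * Yv ^ 1 by ring, XY_eq, coeff_ee_monomial]
  have E11 := coeq _ _ _ E1 2 0 rfl; rw [cX2] at E11; norm_num at E11
  have E12 := coeq _ _ _ E1 1 1 rfl; rw [cX2] at E12; norm_num at E12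
  have E13 := coeq _ _ _ E1 0 2 rfl; rw [cX2] at E13; norm_num at E13
  have E21 := coeq _ _ _ E2 2 0 rfl; rw [cXY] at E21; norm_num at E21
  have E22 := coeq _ _ _ E2 1 1 rfl; rw [cXY] at E22; norm_num at E22
  have E23 := coeq _ _ _ E2 0 2 rfl; rw [cXY] at E23; norm_num at E23
  have E31 := coeq _ _ _ E3 2 0 rfl; rw [cY2] at E31; norm_num at E31
  have E32 := coeq _ _ _ E3 1 1 rfl; rw [cY2] at E32; norm_num at E32
  have E33 := coeq _ _ _ E3 0 2 rfl; rw [cY2] at E33; norm_num at E33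
  set a1 := MvPowerSeries.constantCoeff p1
  set b1 := MvPowerSeries.constantCoeff q1
  set a2 := MvPowerSeries.constantCoeff p2
  set b2 := MvPowerSeries.constantCoeff q2
  set a3 := MvPowerSeries.constantCoeff p3
  set b3 := MvPowerSeries.constantCoeff q3
  set G20 := MvPowerSeries.coeff (ee 2 0) g
  set G11 := MvPowerSeries.coeff (ee 1 1) g
  set G02 := MvPowerSeries.coeff (ee 0 2) g
  set H20 := MvPowerSeries.coeff (ee 2 0) h
  set H11 := MvPowerSeries.coeff (ee 1 1) h
  set H02 := MvPowerSeries.coeff (ee 0 2) h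
  have hdet : (a1 * G20 + b1 * H20) * ((a2 * G11 + b2 * H11) * (a3 * G02 + b3 * H02)
        - (a2 * G02 + b2 * H02) * (a3 * G11 + b3 * H11))
      - (a1 * G11 + b1 * H11) * ((a2 * G20 + b2 * H20) * (a3 * G02 + b3 * H02)
        - (a2 * G02 + b2 * H02) * (a3 * G20 + b3 * H20))
      + (a1 * G02 + b1 * H02) * ((a2 * G20 + b2 * H20) * (a3 * G11 + b3 * H11)
        - (a2 * G11 + b2 * H11) * (a3 * G20 + b3 * H20)) = 0 := by ring
  rw [E11, E12, E13, E21, E22, E23, E31, E32, E33] at hdet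
  norm_num at hdet

theorem statement3 (f : R2) (g h : R2) (I : Ideal R2)
    (hjet : f - (Xv ^ 3 - Yv ^ 3) ∈ mR2 ^ 4)
    (hI : I = Ideal.span {g, h})
    (hdx : pd 0 f ∈ I) (hdy : pd 1 f ∈ I) (hm3 : mR2 ^ 3 ≤ I)
    (hdim : 3 ≤ Module.finrank ℂ (R2 ⧸ I)) :
    (∃ φ : R2 ≃ₐ[ℂ] R2,
      Ideal.map (φ : R2 →+* R2) I = Ideal.span {Xv ^ 2, Yv ^ 2}) ∧
    Module.finrank ℂ (R2 ⧸ I) = 4 := by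
  obtain ⟨hX2, hY2⟩ := X2_Y2_mem f I hjet hdx hdy hm3
  have hJI : JJ ≤ I := by
    rw [JJ, Ideal.span_le]
    rintro x (rfl | rfl)
    exacts [hX2, hY2]
  have hg : g ∈ I := by rw [hI]; exact Ideal.subset_span (Or.inl rfl)
  have hh : h ∈ I := by rw [hI]; exact Ideal.subset_span (Or.inr rfl)
  obtain ⟨g00, g10, g01⟩ := low_vanish I hX2 hY2 hm3 hdim g hg
  obtain ⟨h00, h10, h01⟩ := low_vanish I hX2 hY2 hm3 hdim h hh
  have gvan := vanish2 g g00 g10 g01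
  have hvan := vanish2 h h00 h10 h01
  have hIJ : I = JJ := by
    by_cases hD : MvPowerSeries.coeff (ee 1 1) g = 0 ∧ MvPowerSeries.coeff (ee 1 1) h = 0
    · refine le_antisymm ?_ hJI
      rw [hI, Ideal.span_le]
      intro x hx
      simp only [Set.mem_insert_iff, Set.mem_singleton_iff] at hx
      rcases hx with h1 | h1
      · rw [h1]; exact mem_J g g00 g10 g01 hD.1
      · rw [h1]; exact mem_J h h00 h10 h01 hD.2
    · exfalso
      rw [not_and_or] at hD
      have hXY : Xv * Yv ∈ I := by
        rcases hD with hD | hD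
        · exact XY_mem I hJI g hg g00 g10 g01 hD
        · exact XY_mem I hJI h hh h00 h10 h01 hD
      exact not_two_gen g h I hI gvan hvan hX2 hY2 hXY
  constructor
  · refine ⟨AlgEquiv.refl, ?_⟩
    have hid : ((AlgEquiv.refl : R2 ≃ₐ[ℂ] R2) : R2 →+* R2) = RingHom.id R2 := rfl
    rw [hid, Ideal.map_id, hIJ]
    rfl
  · rw [hIJ]
    exact finrank_JJ

end
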